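/- Every finite non-abelian group contains a non-abelian metabelian subgroup. -/

import Mathlib

/-- If every proper subgroup of `K` is abelian, then every proper subgroup of a quotient of
`K` is abelian. -/
lemma quot_prop {K : Type*} [Group K] (N : Subgroup K) [N.Normal]
    (h : ∀ S : Subgroup K, S ≠ ⊤ → ∀ a b : K, a ∈ S → b ∈ S → a * b = b * a) :
    ∀ S : Subgroup (K ⧸ N), S ≠ ⊤ → ∀ a b : K ⧸ N, a ∈ S → b ∈ S → a * b = b * a := by
  intro S hS a b ha hb
  obtain ⟨x, rfl⟩ := QuotientGroup.mk'_surjective N a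
  obtain ⟨y, rfl⟩ := QuotientGroup.mk'_surjective N b
  have hc : S.comap (QuotientGroup.mk' N) ≠ ⊤ := by
    intro h'
    apply hS
    rw [← Subgroup.map_comap_eq_self_of_surjective (QuotientGroup.mk'_surjective N) S, h']
    rw [← MonoidHom.range_eq_map, MonoidHom.range_eq_top]
    exact QuotientGroup.mk'_surjective N
  have hxy := h _ hc x y ha hb
  rw [← map_mul, ← map_mul, hxy]

/-- Miller–Moreno style lemma: a finite group all of whose proper subgroups are abelian
is solvable. -/
lemma aux_solvable : ∀ n : ℕ, ∀ (K : Type*) [Group K] [Finite K], Nat.card K ≤ n →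
    (∀ S : Subgroup K, S ≠ ⊤ → ∀ a b : K, a ∈ S → b ∈ S → a * b = b * a) → Group.IsSolvable K := by
  intro n
  induction n with
  | zero =>
      intro K _ _ hcard _
      have : 0 < Nat.card K := Nat.card_pos
      omega
  | succ n ih =>
      intro K _ _ hcard h
      by_cases hab : ∀ a b : K, a * b = b * a
      · exact isSolvable_of_comm hab
      · have hnt : Nontrivial K := by
          by_contra h'
          have := not_nontrivial_iff_subsingleton.mp h'
          exact hab fun a b => Subsingleton.elim _ _
        have h1 : 1 < Nat.card K := Finite.one_lt_card
        set p := (Nat.card K).minFac with hp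
        haveI : Fact p.Prime := ⟨Nat.minFac_prime (by omega)⟩
        obtain ⟨P⟩ : Nonempty (Sylow p K) := Sylow.nonempty
        have hdvd : p ∣ Nat.card K := Nat.minFac_dvd _
        have hPcard : Nat.card (P : Subgroup K) = p ^ (Nat.card K).factorization p :=
          P.card_eq_multiplicity
        have hPbig : 1 < Nat.card (P : Subgroup K) := by
          rw [hPcard]
          have hpos : 0 < (Nat.card K).factorization p :=
            Nat.Prime.factorization_pos_of_dvd (Fact.out) (by omega) hdvd
          have := (Fact.out : p.Prime).two_le
          calc 1 < p := by omega
          _ ≤ p ^ (Nat.card K).factorization p := Nat.le_self_pow (by omega) p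
        have hPbot : (P : Subgroup K) ≠ ⊥ :=
          (Subgroup.one_lt_card_iff_ne_bot _).mp hPbig
        -- common step: a nontrivial proper normal subgroup gives solvability
        have key : ∀ N : Subgroup K, N.Normal → N ≠ ⊥ → N ≠ ⊤ → Group.IsSolvable K := by
          intro N hN hb ht
          haveI := hN
          haveI : Group.IsSolvable N := isSolvable_of_comm fun a b =>
            Subtype.ext (h N ht a b a.2 b.2)
          have h2 : 2 ≤ Nat.card N := (Subgroup.one_lt_card_iff_ne_bot _).mpr hb
          have e := Subgroup.card_eq_card_quotient_mul_card_subgroup N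
          have hqpos : 0 < Nat.card (K ⧸ N) := Nat.card_pos
          have hcq : Nat.card (K ⧸ N) ≤ n := by nlinarith
          haveI : Group.IsSolvable (K ⧸ N) := ih (K ⧸ N) hcq (quot_prop N h)
          exact solvable_of_ker_le_range N.subtype (QuotientGroup.mk' N)
            (by rw [QuotientGroup.ker_mk', Subgroup.range_subtype])
        by_cases hPtop : (P : Subgroup K) = ⊤
        · -- K is a p-group, hence nilpotent, hence solvable
          have hpg : IsPGroup p K := by
            have := P.2
            rw [hPtop] at this
            exact this.of_equiv Subgroup.topEquiv
          haveI := hpg.isNilpotent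
          infer_instance
        · by_cases hnorm : Subgroup.normalizer ((P : Subgroup K) : Set K) = ⊤
          · exact key P (Subgroup.normalizer_eq_top_iff.mp hnorm) hPbot hPtop
          · -- Burnside's normal p-complement theorem
            have hcent : Subgroup.normalizer ((P : Subgroup K) : Set K) ≤ Subgroup.centralizer (P : Set K) := by
              intro g hg
              rw [Subgroup.mem_centralizer_iff]
              intro x hx
              exact h _ hnorm x g (Subgroup.le_normalizer hx) hg
            set N := (MonoidHom.transferSylow P hcent).ker with hNdef
            have hcomp := MonoidHom.ker_transferSylow_isComplement' P hcent
            have hmul : Nat.card N * Nat.card (P : Subgroup K) = Nat.card K :=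
              hcomp.card_mul
            have hNtop : N ≠ ⊤ := by
              intro hEq
              have : Nat.card N = Nat.card K := by
                rw [hEq]; exact Nat.card_congr Subgroup.topEquiv.toEquiv
              rw [this] at hmul
              nlinarith
            have hNbot : N ≠ ⊥ := by
              intro hEq
              have : Nat.card N = 1 := by rw [hEq]; exact Subgroup.card_bot
              rw [this, one_mul] at hmul
              exact hPtop (Subgroup.eq_top_of_card_eq _ hmul)
            exact key N (MonoidHom.normal_ker _) hNbot hNtop

/-- Every finite non-abelian group contains a non-abelian metabelian subgroup. -/
theorem stmt5 {G : Type*} [Group G] [Finite G] (hna : ∃ a b : G, a * b ≠ b * a) :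
    ∃ H : Subgroup G, derivedSeries ↥H 2 = ⊥ ∧ ∃ a b : ↥H, a * b ≠ b * a := by
  classical
  set S : Set (Subgroup G) := {H | ∃ a b : ↥H, a * b ≠ b * a} with hSdef
  have hStop : (⊤ : Subgroup G) ∈ S := by
    obtain ⟨a, b, hab⟩ := hna
    exact ⟨⟨a, trivial⟩, ⟨b, trivial⟩, fun hEq => hab (congrArg Subtype.val hEq)⟩
  have hne : {m | ∃ H ∈ S, Nat.card ↥H = m}.Nonempty := ⟨_, ⊤, hStop, rfl⟩
  obtain ⟨H, hHS, hHcard⟩ := Nat.sInf_mem hne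
  refine ⟨H, ?_, hHS⟩
  -- every proper subgroup of H is abelian
  have habel : ∀ T : Subgroup ↥H, T ≠ ⊤ → ∀ a b : ↥H, a ∈ T → b ∈ T → a * b = b * a := by
    intro T hT a b ha hb
    by_contra hne'
    have hmapS : T.map H.subtype ∈ S := by
      refine ⟨⟨(a : G), Subgroup.mem_map_of_mem _ ha⟩, ⟨(b : G), Subgroup.mem_map_of_mem _ hb⟩,
        fun hEq => hne' ?_⟩
      have h1 : (a : G) * (b : G) = (b : G) * (a : G) := congrArg Subtype.val hEq
      exact Subtype.ext h1
    have hcardT : Nat.card (T.map H.subtype) = Nat.card T :=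
      (Nat.card_congr (Subgroup.equivMapOfInjective T H.subtype
        H.subtype_injective).toEquiv).symm
    have hlt : Nat.card (T.map H.subtype) < Nat.card ↥H := by
      rw [hcardT]
      have hle : Nat.card T ≤ Nat.card ↥H :=
        Nat.card_le_card_of_injective _ (Subtype.val_injective)
      rcases lt_or_eq_of_le hle with h' | h'
      · exact h'
      · exact absurd (Subgroup.eq_top_of_card_eq _ h') hT
    have hmem : Nat.card ↥(T.map H.subtype) ∈ {m | ∃ H ∈ S, Nat.card ↥H = m} :=
      ⟨T.map H.subtype, hmapS, rfl⟩
    have := Nat.sInf_le hmem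
    omega
  haveI hsolv : Group.IsSolvable ↥H := aux_solvable (Nat.card ↥H) ↥H le_rfl habel
  -- the derived subgroup is proper
  have hD : derivedSeries ↥H 1 ≠ ⊤ := by
    intro hEq
    have hall : ∀ m, derivedSeries ↥H m = ⊤ := by
      intro m
      induction m with
      | zero => rfl
      | succ k ihk =>
          rw [derivedSeries_succ, ihk]
          rw [derivedSeries_one] at hEq
          exact hEq
    obtain ⟨m, hm⟩ := isSolvable_def ↥H |>.mp hsolv
    rw [hall m] at hm
    obtain ⟨a, b, hab⟩ := hHS
    have ha : a = 1 := by
      have : a ∈ (⊥ : Subgroup ↥H) := hm ▸ Subgroup.mem_top a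
      exact Subgroup.mem_bot.mp this
    have hb : b = 1 := by
      have : b ∈ (⊥ : Subgroup ↥H) := hm ▸ Subgroup.mem_top b
      exact Subgroup.mem_bot.mp this
    rw [ha, hb] at hab
    exact hab rfl
  -- hence the derived subgroup is abelian, so the second derived subgroup is trivial
  show derivedSeries ↥H (1 + 1) = ⊥
  rw [derivedSeries_succ]
  rw [eq_bot_iff]
  rw [Subgroup.commutator_le]
  intro g hg h' hh'
  rw [Subgroup.mem_bot]
  have := habel _ hD g h' hg hh'
  rw [commutatorElement_def, this]
  group
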